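/- The composition G = F ∘ H of an ε-universal (N; K, M) hash family F : X → Y and a δ-resistant (M; log T + ℓ) quantum hash generator H = {h₁,…,h_T}, h_j : Y → F_q, is a (ε+δ)-resistant (K; log N + log T + ℓ) quantum hash generator. -/

import Mathlib

open scoped InnerProductSpace

theorem stmt_4 {X Y : Type*} [Fintype X] [Fintype Y] [DecidableEq Y]
    {𝔽 : Type*} [Field 𝔽] [Fintype 𝔽] (q : ℕ) (hq : Fintype.card 𝔽 = q)
    (N T ℓ K M : ℕ) (hN : 0 < N) (hT : 0 < T)
    (hK : Fintype.card X = K) (hM : Fintype.card Y = M)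
    (ε δ : ℝ) (hε : 0 ≤ ε) (hδ : 0 ≤ δ)
    -- F is an ε-universal (N; K, M) hash family
    (F : Fin N → X → Y)
    (huniv : ∀ w w' : X, w ≠ w' →
      ((Finset.univ.filter fun i : Fin N => F i w = F i w').card : ℝ) ≤ ε * N)
    -- H = {h₁,…,h_T} with h_j : Y → F_q, amplitudes determined by h_j(v)
    (H : Fin T → Y → 𝔽)
    (α : 𝔽 → EuclideanSpace ℂ (Fin (2^ℓ)))
    (hα : ∀ v, ‖α v‖ = 1)
    -- ψ_H generated by H on log T + ℓ qubits, assumed δ-resistant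
    (ψH : Y → EuclideanSpace ℂ (Fin T × Fin (2^ℓ)))
    (hψH : ∀ v j x, ψH v (j, x) = (1 / Real.sqrt T) * α (H j v) x)
    (hres : ∀ v v' : Y, v ≠ v' → ‖(⟪ψH v, ψH v'⟫_ℂ)‖ ≤ δ)
    (hlog : Real.logb 2 K > Real.logb 2 N + Real.logb 2 T + ℓ)
    -- ψ_G generated by the composition G = F ∘ H on log N + log T + ℓ qubits
    (ψG : X → EuclideanSpace ℂ (Fin N × (Fin T × Fin (2^ℓ))))
    (hψG : ∀ w i j x,
      ψG w (i, (j, x)) = (1 / Real.sqrt N) * ((1 / Real.sqrt T) * α (H j (F i w)) x)) :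
    ∀ w w' : X, w ≠ w' → ‖(⟪ψG w, ψG w'⟫_ℂ)‖ ≤ ε + δ := by
  intro w w' hww
  have hNR : (0:ℝ) < (N:ℝ) := by exact_mod_cast hN
  have hTR : (0:ℝ) < (T:ℝ) := by exact_mod_cast hT
  have hsq : ((1 / Real.sqrt N : ℝ) : ℂ) * ((1 / Real.sqrt N : ℝ) : ℂ) = ((1 / (N:ℝ) : ℝ) : ℂ) := by
    rw [← Complex.ofReal_mul]
    congr 1
    rw [div_mul_div_comm, Real.mul_self_sqrt hNR.le]
    norm_num
  have hψ : ∀ (w : X) i (p : Fin T × Fin (2^ℓ)),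
      ψG w (i, p) = ((1 / Real.sqrt N : ℝ) : ℂ) * ψH (F i w) p := by
    intro w i ⟨j, x⟩
    rw [hψG, hψH]
    push_cast
    ring
  have key : (⟪ψG w, ψG w'⟫_ℂ) =
      ((1 / (N:ℝ) : ℝ) : ℂ) * ∑ i, ⟪ψH (F i w), ψH (F i w')⟫_ℂ := by
    simp only [PiLp.inner_apply, RCLike.inner_apply]
    rw [Fintype.sum_prod_type, Finset.mul_sum]
    refine Finset.sum_congr rfl fun i _ => ?_
    rw [Finset.mul_sum]
    refine Finset.sum_congr rfl fun p _ => ?_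
    rw [hψ, hψ, map_mul, Complex.conj_ofReal, ← hsq]
    ring
  -- norm of each ψH v is 1
  have hψHnorm : ∀ v : Y, ‖ψH v‖ = 1 := by
    intro v
    have h1 : (⟪ψH v, ψH v⟫_ℂ) = 1 := by
      simp only [PiLp.inner_apply, RCLike.inner_apply, Fintype.sum_prod_type]
      have hrow : ∀ j : Fin T,
          ∑ x, (starRingEnd ℂ) (ψH v (j, x)) * ψH v (j, x) = ((1 / (T:ℝ) : ℝ) : ℂ) := by
        intro j
        have hcs : ∑ x, (starRingEnd ℂ) (α (H j v) x) * α (H j v) x = 1 := by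
          have := inner_self_eq_norm_sq_to_K (𝕜 := ℂ) (α (H j v))
          rw [PiLp.inner_apply] at this
          simp only [RCLike.inner_apply] at this
          rw [show (∑ x, (starRingEnd ℂ) (α (H j v) x) * α (H j v) x) = ∑ x, α (H j v) x * (starRingEnd ℂ) (α (H j v) x) from Finset.sum_congr rfl fun x _ => mul_comm _ _, this, hα]
          norm_num
        have hTsq : ((1 / Real.sqrt T : ℝ) : ℂ) * ((1 / Real.sqrt T : ℝ) : ℂ)
            = ((1 / (T:ℝ) : ℝ) : ℂ) := by
          rw [← Complex.ofReal_mul]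
          congr 1
          rw [div_mul_div_comm, Real.mul_self_sqrt hTR.le]
          norm_num
        calc ∑ x, (starRingEnd ℂ) (ψH v (j, x)) * ψH v (j, x)
            = ∑ x, ((1 / (T:ℝ) : ℝ) : ℂ) * ((starRingEnd ℂ) (α (H j v) x) * α (H j v) x) := by
              refine Finset.sum_congr rfl fun x _ => ?_
              rw [hψH, map_mul, ← hTsq]
              push_cast
              simp only [map_div₀, map_one, Complex.conj_ofReal]
              ring
          _ = ((1 / (T:ℝ) : ℝ) : ℂ) := by
              rw [← Finset.mul_sum, hcs, mul_one]
      rw [show (∑ x : Fin T, ∑ y : Fin (2^ℓ), ψH v (x, y) * (starRingEnd ℂ) (ψH v (x, y))) = ∑ j : Fin T, ∑ x : Fin (2^ℓ), (starRingEnd ℂ) (ψH v (j, x)) * ψH v (j, x) from Finset.sum_congr rfl fun j _ => Finset.sum_congr rfl fun x _ => mul_comm _ _]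
      calc ∑ j, ∑ x, (starRingEnd ℂ) (ψH v (j, x)) * ψH v (j, x)
          = ∑ j : Fin T, ((1 / (T:ℝ) : ℝ) : ℂ) := Finset.sum_congr rfl fun j _ => hrow j
        _ = 1 := by
            rw [Finset.sum_const, Finset.card_univ, Fintype.card_fin, nsmul_eq_mul]
            push_cast
            rw [mul_one_div, div_self (by exact_mod_cast hTR.ne' : (T:ℂ) ≠ 0)]
    have h2 := inner_self_eq_norm_sq_to_K (𝕜 := ℂ) (ψH v)
    rw [h1] at h2
    have h3 : (‖ψH v‖ : ℝ) ^ 2 = 1 := by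
      have h2' : ((‖ψH v‖ ^ 2 : ℝ) : ℂ) = ((1:ℝ) : ℂ) := by push_cast; exact h2.symm
      exact_mod_cast h2'
    nlinarith [norm_nonneg (ψH v)]
  -- bound each inner product term
  have hterm : ∀ v v' : Y, ‖(⟪ψH v, ψH v'⟫_ℂ)‖ ≤ 1 := by
    intro v v'
    calc ‖(⟪ψH v, ψH v'⟫_ℂ)‖ ≤ ‖ψH v‖ * ‖ψH v'‖ := norm_inner_le_norm _ _
      _ = 1 := by rw [hψHnorm, hψHnorm, mul_one]
  set S : Finset (Fin N) := Finset.univ.filter fun i : Fin N => F i w = F i w' with hS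
  have hsum : ∑ i, ‖(⟪ψH (F i w), ψH (F i w')⟫_ℂ)‖ ≤ ε * N + δ * N := by
    rw [← Finset.sum_filter_add_sum_filter_not Finset.univ
      (fun i : Fin N => F i w = F i w')]
    have hA : ∑ i ∈ S, ‖(⟪ψH (F i w), ψH (F i w')⟫_ℂ)‖ ≤ ε * N := by
      calc ∑ i ∈ S, ‖(⟪ψH (F i w), ψH (F i w')⟫_ℂ)‖ ≤ ∑ _i ∈ S, (1:ℝ) :=
            Finset.sum_le_sum fun i _ => hterm _ _
        _ = (S.card : ℝ) := by simp
        _ ≤ ε * N := huniv w w' hww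
    have hB : ∑ i ∈ Finset.univ.filter (fun i : Fin N => ¬ F i w = F i w'),
        ‖(⟪ψH (F i w), ψH (F i w')⟫_ℂ)‖ ≤ δ * N := by
      calc ∑ i ∈ Finset.univ.filter (fun i : Fin N => ¬ F i w = F i w'),
            ‖(⟪ψH (F i w), ψH (F i w')⟫_ℂ)‖
          ≤ ∑ _i ∈ Finset.univ.filter (fun i : Fin N => ¬ F i w = F i w'), δ := by
            refine Finset.sum_le_sum fun i hi => ?_
            exact hres _ _ (Finset.mem_filter.mp hi).2
        _ = ((Finset.univ.filter (fun i : Fin N => ¬ F i w = F i w')).card : ℝ) * δ := by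
            rw [Finset.sum_const, nsmul_eq_mul]
        _ ≤ (N:ℝ) * δ := by
            refine mul_le_mul_of_nonneg_right ?_ hδ
            exact_mod_cast (Finset.card_filter_le _ _).trans_eq (by simp)
        _ = δ * N := mul_comm _ _
    linarith
  rw [key]
  calc ‖((1 / (N:ℝ) : ℝ) : ℂ) * ∑ i, ⟪ψH (F i w), ψH (F i w')⟫_ℂ‖
      = (1 / (N:ℝ)) * ‖∑ i, ⟪ψH (F i w), ψH (F i w')⟫_ℂ‖ := by
        rw [norm_mul, Complex.norm_real, Real.norm_of_nonneg (by positivity)]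
    _ ≤ (1 / (N:ℝ)) * ∑ i, ‖(⟪ψH (F i w), ψH (F i w')⟫_ℂ)‖ := by
        refine mul_le_mul_of_nonneg_left (norm_sum_le _ _) (by positivity)
    _ ≤ (1 / (N:ℝ)) * (ε * N + δ * N) := mul_le_mul_of_nonneg_left hsum (by positivity)
    _ = ε + δ := by field_simp
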